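/- Let D = (x_1,…,x_n) be an n-run OofA design on m components and let M = XᵀX be the moment matrix of its PWO model matrix X. Then tr(M²) = 4 n(n−1) k_{m2}(D) − {2m(m−1)+4} n(n−1) k_ave(D) + n²(m²−m+2)²/4. -/
import Mathlib


/-- A run (addition order) on `m` components: position `r` receives component `x r`.
The position map `π_x` is `x.symm`. -/
abbrev Run (m : ℕ) := Equiv.Perm (Fin m)

/-- Kendall tau distance between two runs. -/
def kendall {m : ℕ} (x y : Run m) : ℕ :=
  (Finset.univ.filter fun p : Fin m × Fin m =>
    p.1 < p.2 ∧
      (((x.symm p.1 : ℕ) : ℤ) - ((x.symm p.2 : ℕ) : ℤ)) *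
        (((y.symm p.1 : ℕ) : ℤ) - ((y.symm p.2 : ℕ) : ℤ)) < 0).card

/-- Average pairwise Kendall tau distance of an `n`-run design. -/
noncomputable def kave {m n : ℕ} (D : Fin n → Run m) : ℝ :=
  (∑ p ∈ Finset.univ.filter (fun p : Fin n × Fin n => p.1 < p.2),
      (kendall (D p.1) (D p.2) : ℝ)) / (n.choose 2 : ℝ)

/-- Second moment of the pairwise Kendall tau distances of an `n`-run design. -/
noncomputable def km2 {m n : ℕ} (D : Fin n → Run m) : ℝ :=
  (∑ p ∈ Finset.univ.filter (fun p : Fin n × Fin n => p.1 < p.2),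
      (kendall (D p.1) (D p.2) : ℝ) ^ 2) / (n.choose 2 : ℝ)

/-- The PWO factor `z_ab(x)` as a real number. -/
def zab {m : ℕ} (x : Run m) (p : Fin m × Fin m) : ℝ :=
  if x.symm p.1 < x.symm p.2 then 1 else -1

/-- The PWO model matrix of a design: a row `(1, z_ab(x_i) : a < b)` for each run. -/
def pwoX {m : ℕ} {ι : Type} (D : ι → Run m) :
    Matrix ι (Option {p : Fin m × Fin m // p.1 < p.2}) ℝ :=
  fun i c => match c with
    | none => 1
    | some p => zab (D i) p.1

open Finset

lemma zab_mul {m : ℕ} (x y : Run m) (p : Fin m × Fin m) (hp : p.1 < p.2) :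
    zab x p * zab y p =
      1 - 2 * (if (((x.symm p.1 : ℕ) : ℤ) - ((x.symm p.2 : ℕ) : ℤ)) *
        (((y.symm p.1 : ℕ) : ℤ) - ((y.symm p.2 : ℕ) : ℤ)) < 0 then (1:ℝ) else 0) := by
  have hne : p.1 ≠ p.2 := hp.ne
  have hx : x.symm p.1 ≠ x.symm p.2 := fun h => hne (x.symm.injective h)
  have hy : y.symm p.1 ≠ y.symm p.2 := fun h => hne (y.symm.injective h)
  unfold zab
  rcases lt_or_gt_of_ne hx with h1 | h1 <;> rcases lt_or_gt_of_ne hy with h2 | h2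
  · have hz : ¬ ((((x.symm p.1 : ℕ) : ℤ) - ((x.symm p.2 : ℕ) : ℤ)) *
        (((y.symm p.1 : ℕ) : ℤ) - ((y.symm p.2 : ℕ) : ℤ)) < 0) := by
      have a1 : (((x.symm p.1 : ℕ) : ℤ) - ((x.symm p.2 : ℕ) : ℤ)) < 0 := by
        have h := Fin.lt_def.mp h1; omega
      have a2 : (((y.symm p.1 : ℕ) : ℤ) - ((y.symm p.2 : ℕ) : ℤ)) < 0 := by
        have h := Fin.lt_def.mp h2; omega
      nlinarith
    simp [h1, h2, hz]
  · have hz : ((((x.symm p.1 : ℕ) : ℤ) - ((x.symm p.2 : ℕ) : ℤ)) *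
        (((y.symm p.1 : ℕ) : ℤ) - ((y.symm p.2 : ℕ) : ℤ)) < 0) := by
      have a1 : (((x.symm p.1 : ℕ) : ℤ) - ((x.symm p.2 : ℕ) : ℤ)) < 0 := by
        have h := Fin.lt_def.mp h1; omega
      have a2 : 0 < (((y.symm p.1 : ℕ) : ℤ) - ((y.symm p.2 : ℕ) : ℤ)) := by
        have h := Fin.lt_def.mp h2; omega
      nlinarith
    simp [h1, not_lt_of_gt h2, hz]
    norm_num
  · have hz : ((((x.symm p.1 : ℕ) : ℤ) - ((x.symm p.2 : ℕ) : ℤ)) *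
        (((y.symm p.1 : ℕ) : ℤ) - ((y.symm p.2 : ℕ) : ℤ)) < 0) := by
      have a1 : 0 < (((x.symm p.1 : ℕ) : ℤ) - ((x.symm p.2 : ℕ) : ℤ)) := by
        have h := Fin.lt_def.mp h1; omega
      have a2 : (((y.symm p.1 : ℕ) : ℤ) - ((y.symm p.2 : ℕ) : ℤ)) < 0 := by
        have h := Fin.lt_def.mp h2; omega
      nlinarith
    simp [not_lt_of_gt h1, h2, hz]
    norm_num
  · have hz : ¬ ((((x.symm p.1 : ℕ) : ℤ) - ((x.symm p.2 : ℕ) : ℤ)) *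
        (((y.symm p.1 : ℕ) : ℤ) - ((y.symm p.2 : ℕ) : ℤ)) < 0) := by
      have a1 : 0 < (((x.symm p.1 : ℕ) : ℤ) - ((x.symm p.2 : ℕ) : ℤ)) := by
        have h := Fin.lt_def.mp h1; omega
      have a2 : 0 < (((y.symm p.1 : ℕ) : ℤ) - ((y.symm p.2 : ℕ) : ℤ)) := by
        have h := Fin.lt_def.mp h2; omega
      nlinarith
    simp [not_lt_of_gt h1, not_lt_of_gt h2, hz]

lemma kendall_self {m : ℕ} (x : Run m) : kendall x x = 0 := by
  rw [kendall, Finset.card_eq_zero, Finset.filter_eq_empty_iff]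
  intro p _
  push_neg
  intro _
  nlinarith [sq_nonneg ((((x.symm p.1 : ℕ) : ℤ) - ((x.symm p.2 : ℕ) : ℤ)))]

lemma kendall_symm {m : ℕ} (x y : Run m) : kendall x y = kendall y x := by
  unfold kendall
  congr 1
  apply Finset.filter_congr
  intro p _
  rw [mul_comm]

lemma sum_sym {n : ℕ} (f : Fin n → Fin n → ℝ) (hd : ∀ i, f i i = 0)
    (hs : ∀ i j, f i j = f j i) :
    ∑ i, ∑ j, f i j
      = 2 * ∑ p ∈ univ.filter (fun p : Fin n × Fin n => p.1 < p.2), f p.1 p.2 := by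
  have h1 : ∑ i, ∑ j, f i j = ∑ p : Fin n × Fin n, f p.1 p.2 := by
    rw [Fintype.sum_prod_type]
  rw [h1, ← Finset.sum_filter_add_sum_filter_not univ
      (fun p : Fin n × Fin n => p.1 < p.2)]
  have h2 : ∑ p ∈ univ.filter (fun p : Fin n × Fin n => ¬ p.1 < p.2), f p.1 p.2
      = ∑ p ∈ univ.filter (fun p : Fin n × Fin n => p.1 < p.2), f p.1 p.2 := by
    rw [← Finset.sum_filter_add_sum_filter_not
        (univ.filter (fun p : Fin n × Fin n => ¬ p.1 < p.2)) (fun p => p.2 < p.1)]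
    have h3 : ∑ p ∈ (univ.filter (fun p : Fin n × Fin n => ¬ p.1 < p.2)).filter
        (fun p => ¬ p.2 < p.1), f p.1 p.2 = 0 := by
      apply Finset.sum_eq_zero
      intro p hp
      simp only [mem_filter] at hp
      have he : p.1 = p.2 := le_antisymm (not_lt.mp hp.2) (not_lt.mp hp.1.2)
      rw [he]; exact hd _
    rw [h3, add_zero]
    refine Finset.sum_equiv (Equiv.prodComm (Fin n) (Fin n)) ?_ ?_
    · intro p
      simp only [mem_filter, mem_univ, true_and, Equiv.prodComm_apply,
        Prod.fst_swap, Prod.snd_swap]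
      exact ⟨fun h => h.2, fun h => ⟨asymm h, h⟩⟩
    · intro p _
      simp only [Equiv.prodComm_apply, Prod.fst_swap, Prod.snd_swap]
      exact hs p.1 p.2
  rw [h2]; ring

lemma card_pairs (m : ℕ) :
    2 * (univ.filter fun p : Fin m × Fin m => p.1 < p.2).card = m * (m - 1) := by
  have h1 : (univ.filter fun p : Fin m × Fin m => p.1 < p.2).card
      = ∑ b : Fin m, (b : ℕ) := by
    rw [Finset.card_filter, Fintype.sum_prod_type_right]
    refine Finset.sum_congr rfl fun b _ => ?_
    have : (univ.filter fun a : Fin m => a < b) = Finset.Iio b := by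
      ext a; simp
    rw [← Finset.card_filter, this, Fin.card_Iio]
  rw [h1, Fin.sum_univ_eq_sum_range (fun i => i) m, mul_comm,
    Finset.sum_range_id_mul_two]

lemma row_dot {m n : ℕ} (D : Fin n → Run m) (i j : Fin n) :
    ∑ c, pwoX D i c * pwoX D j c
      = 1 + ((univ.filter fun p : Fin m × Fin m => p.1 < p.2).card : ℝ)
        - 2 * (kendall (D i) (D j) : ℝ) := by
  rw [Fintype.sum_option]
  have hnone : pwoX D i none * pwoX D j none = 1 := by simp [pwoX]
  have hsub : ∑ p : {p : Fin m × Fin m // p.1 < p.2},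
      pwoX D i (some p) * pwoX D j (some p)
      = ∑ p ∈ univ.filter (fun p : Fin m × Fin m => p.1 < p.2),
          zab (D i) p * zab (D j) p := by
    rw [Finset.sum_subtype (p := fun p : Fin m × Fin m => p.1 < p.2) (univ.filter (fun p : Fin m × Fin m => p.1 < p.2))
      (fun x => by simp) (fun q => zab (D i) q * zab (D j) q)]
    rfl
  rw [hnone, hsub]
  have hcong : ∑ p ∈ univ.filter (fun p : Fin m × Fin m => p.1 < p.2),
      zab (D i) p * zab (D j) p
      = ∑ p ∈ univ.filter (fun p : Fin m × Fin m => p.1 < p.2),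
        (1 - 2 * (if ((((D i).symm p.1 : ℕ) : ℤ) - (((D i).symm p.2 : ℕ) : ℤ)) *
          ((((D j).symm p.1 : ℕ) : ℤ) - (((D j).symm p.2 : ℕ) : ℤ)) < 0
          then (1:ℝ) else 0)) := by
    refine Finset.sum_congr rfl fun p hp => ?_
    exact zab_mul (D i) (D j) p (by simpa using hp)
  rw [hcong, Finset.sum_sub_distrib, Finset.sum_const, ← Finset.mul_sum,
    Finset.sum_boole, Finset.filter_filter]
  have hk : (kendall (D i) (D j) : ℝ)
      = ((univ.filter fun p : Fin m × Fin m =>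
          p.1 < p.2 ∧
          ((((D i).symm p.1 : ℕ) : ℤ) - (((D i).symm p.2 : ℕ) : ℤ)) *
            ((((D j).symm p.1 : ℕ) : ℤ) - (((D j).symm p.2 : ℕ) : ℤ)) < 0).card : ℝ) := by
    rw [kendall]
  rw [← hk]
  simp [nsmul_eq_mul]
  ring

lemma two_choose_two (n : ℕ) : 2 * n.choose 2 = n * (n - 1) := by
  rcases n with _ | k
  · rfl
  · have hdvd : 2 ∣ (k + 1) * k := by
      rcases Nat.even_or_odd k with ⟨t, ht⟩ | ⟨t, ht⟩
      · exact ⟨(k + 1) * t, by subst ht; ring⟩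
      · exact ⟨(t + 1) * k, by subst ht; ring⟩
    rw [Nat.choose_two_right, Nat.add_sub_cancel, Nat.mul_div_cancel' hdvd]

open Matrix in
theorem stmt2 {m n : ℕ} (hm : 2 ≤ m) (D : Fin n → Run m) :
    Matrix.trace ((pwoX D)ᵀ * pwoX D * ((pwoX D)ᵀ * pwoX D)) =
      4 * (n : ℝ) * ((n : ℝ) - 1) * km2 D -
        (2 * (m : ℝ) * ((m : ℝ) - 1) + 4) * (n : ℝ) * ((n : ℝ) - 1) * kave D +
        (n : ℝ) ^ 2 * ((m : ℝ) ^ 2 - (m : ℝ) + 2) ^ 2 / 4 := by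
  classical
  rw [kave, km2]
  set C : ℝ := (n.choose 2 : ℝ) with hCdef
  set A : ℝ := ∑ p ∈ univ.filter (fun p : Fin n × Fin n => p.1 < p.2),
      (kendall (D p.1) (D p.2) : ℝ) with hAdef
  set B : ℝ := ∑ p ∈ univ.filter (fun p : Fin n × Fin n => p.1 < p.2),
      (kendall (D p.1) (D p.2) : ℝ) ^ 2 with hBdef
  set s : ℝ := ((univ.filter fun p : Fin m × Fin m => p.1 < p.2).card : ℝ) with hsdef
  -- scalar facts
  have hs2 : 2 * s = (m : ℝ) * ((m : ℝ) - 1) := by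
    have h := card_pairs m
    have h' : ((2 * (univ.filter fun p : Fin m × Fin m => p.1 < p.2).card : ℕ) : ℝ)
        = ((m * (m - 1) : ℕ) : ℝ) := congrArg (fun t : ℕ => (t : ℝ)) h
    push_cast [Nat.cast_sub (show 1 ≤ m by omega)] at h'
    rw [hsdef]; linarith
  have hC2 : 2 * C = (n : ℝ) * ((n : ℝ) - 1) := by
    rcases Nat.eq_zero_or_pos n with h0 | h1
    · subst h0; simp [hCdef]
    · have h := two_choose_two n
      have h' : ((2 * n.choose 2 : ℕ) : ℝ) = ((n * (n - 1) : ℕ) : ℝ) :=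
        congrArg (fun t : ℕ => (t : ℝ)) h
      push_cast [Nat.cast_sub h1] at h'
      rw [hCdef]; linarith
  -- trace computation
  have e1 : (pwoX D)ᵀ * pwoX D * ((pwoX D)ᵀ * pwoX D)
      = (pwoX D)ᵀ * (pwoX D * ((pwoX D)ᵀ * pwoX D)) := by rw [Matrix.mul_assoc]
  rw [e1, Matrix.trace_mul_comm]
  have e2 : (pwoX D * ((pwoX D)ᵀ * pwoX D)) * (pwoX D)ᵀ
      = (pwoX D * (pwoX D)ᵀ) * (pwoX D * (pwoX D)ᵀ) := by
    simp only [Matrix.mul_assoc]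
  rw [e2]
  have e3 : Matrix.trace ((pwoX D * (pwoX D)ᵀ) * (pwoX D * (pwoX D)ᵀ))
      = ∑ i, ∑ j, (∑ c, pwoX D i c * pwoX D j c) * (∑ c, pwoX D j c * pwoX D i c) := by
    simp [Matrix.trace, Matrix.mul_apply, Matrix.transpose_apply, Matrix.diag]
  rw [e3]
  have e4 : ∀ i j : Fin n, (∑ c, pwoX D i c * pwoX D j c) * (∑ c, pwoX D j c * pwoX D i c)
      = (1 + s - 2 * (kendall (D i) (D j) : ℝ)) ^ 2 := by
    intro i j
    rw [row_dot, row_dot, kendall_symm (D j) (D i), ← hsdef]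
    ring
  simp only [e4]
  have e5 : ∀ i j : Fin n, (1 + s - 2 * (kendall (D i) (D j) : ℝ)) ^ 2
      = (1 + s) ^ 2 - 4 * (1 + s) * (kendall (D i) (D j) : ℝ)
        + 4 * (kendall (D i) (D j) : ℝ) ^ 2 := by intro i j; ring
  simp only [e5]
  rw [show (∑ i : Fin n, ∑ j : Fin n, ((1 + s) ^ 2
      - 4 * (1 + s) * (kendall (D i) (D j) : ℝ)
      + 4 * (kendall (D i) (D j) : ℝ) ^ 2))
    = (n : ℝ) ^ 2 * (1 + s) ^ 2
      - 4 * (1 + s) * (∑ i, ∑ j, (kendall (D i) (D j) : ℝ))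
      + 4 * (∑ i, ∑ j, (kendall (D i) (D j) : ℝ) ^ 2) from by
    simp only [Finset.sum_add_distrib, Finset.sum_sub_distrib, Finset.sum_const,
      Finset.card_univ, Fintype.card_fin, nsmul_eq_mul, ← Finset.mul_sum]
    ring]
  have hA2 : ∑ i, ∑ j, (kendall (D i) (D j) : ℝ) = 2 * A := by
    rw [hAdef]
    exact sum_sym _ (fun i => by simp [kendall_self])
      (fun i j => by rw [kendall_symm])
  have hB2 : ∑ i, ∑ j, (kendall (D i) (D j) : ℝ) ^ 2 = 2 * B := by
    rw [hBdef]
    exact sum_sym _ (fun i => by simp [kendall_self])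
      (fun i j => by rw [kendall_symm])
  rw [hA2, hB2]
  have h1s : s = (m : ℝ) * ((m : ℝ) - 1) / 2 := by linarith
  rcases eq_or_ne C 0 with hC0 | hC0
  · have hn1 : n < 2 := by
      have h0 : ((n.choose 2 : ℕ) : ℝ) = 0 := by rw [← hCdef]; exact hC0
      exact Nat.choose_eq_zero_iff.mp (by exact_mod_cast h0)
    have hemp : (univ.filter (fun p : Fin n × Fin n => p.1 < p.2)) = ∅ := by
      rw [Finset.filter_eq_empty_iff]
      intro p _
      have h1 := p.1.2
      have h2 := p.2.2
      simp only [Fin.lt_def]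
      omega
    have hA0 : A = 0 := by rw [hAdef, hemp, Finset.sum_empty]
    have hB0 : B = 0 := by rw [hBdef, hemp, Finset.sum_empty]
    rw [hA0, hB0, hC0, h1s]
    norm_num
    ring
  · have eB : 4 * (n : ℝ) * ((n : ℝ) - 1) * (B / C) = 8 * B := by
      field_simp
      linear_combination (-4 * B) * hC2
    have eA : (2 * (m : ℝ) * ((m : ℝ) - 1) + 4) * (n : ℝ) * ((n : ℝ) - 1) * (A / C)
        = (2 * (m : ℝ) * ((m : ℝ) - 1) + 4) * 2 * A := by
      field_simp
      linear_combination (-(2 * (m:ℝ) * ((m:ℝ) - 1) + 4) * A) * hC2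
    rw [eB, eA, h1s]
    ring
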